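/- Let d ∈ ℕ, α > 0, K > 0, and for k = 1, 2 let L_k : ℝ^d → ℝ satisfy Assumption 1 and be bounded above with supremum L̄_k := sup L_k. Then there exists a constant c₀ > 0, depending only on α, K, and the constants M_{L_k}, C_{L_k}, L̄_k, L̲_k of L₁ and L₂, such that for all Borel probability measures μ, μ̂ on ℝ^d with ∫ |θ|⁴ dμ ≤ K and ∫ |θ|⁴ dμ̂ ≤ K, and for k = 1, 2: |m_{L_k}^α[μ] − m_{L_k}^α[μ̂]| ≤ c₀ W₂(μ, μ̂). -/

import Mathlib

open MeasureTheory Real Set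

/-- The consensus point `m_L^α[ρ] = (∫ θ e^{-αL(θ)} dρ) / (∫ e^{-αL(θ)} dρ)`. -/
noncomputable def consensusPoint {d : ℕ} (α : ℝ) (L : EuclideanSpace ℝ (Fin d) → ℝ)
    (ρ : Measure (EuclideanSpace ℝ (Fin d))) : EuclideanSpace ℝ (Fin d) :=
  (∫ θ, Real.exp (-α * L θ) ∂ρ)⁻¹ • ∫ θ, Real.exp (-α * L θ) • θ ∂ρ

/-- The 2-Wasserstein distance between two Borel probability measures on `ℝ^d`:
the infimum over couplings `π` of `(∬ |θ - θ̂|² dπ)^{1/2}`. -/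
noncomputable def W2 {d : ℕ} (μ ν : Measure (EuclideanSpace ℝ (Fin d))) : ℝ :=
  sInf {c : ℝ | ∃ pl : Measure (EuclideanSpace ℝ (Fin d) × EuclideanSpace ℝ (Fin d)),
    IsProbabilityMeasure pl ∧ pl.map Prod.fst = μ ∧ pl.map Prod.snd = ν ∧
    c = (∫ p, ‖p.1 - p.2‖ ^ 2 ∂pl) ^ (1/2 : ℝ)}

/-- Assumption 1 of the paper for a loss function `L` with constants
`M_L, C_L, M_{∇L}, C_{∇L}`. -/
structure Assumption1 {d : ℕ} (L : EuclideanSpace ℝ (Fin d) → ℝ)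
    (ML CL MgL CgL : ℝ) : Prop where
  ML_pos : 0 < ML
  CL_pos : 0 < CL
  MgL_pos : 0 < MgL
  CgL_pos : 0 < CgL
  bddBelow : BddBelow (Set.range L)
  differentiable : Differentiable ℝ L
  locLip : ∀ θ θ' : EuclideanSpace ℝ (Fin d),
    |L θ - L θ'| ≤ ML * (‖θ‖ + ‖θ'‖) * ‖θ - θ'‖
  quadGrowth : ∀ θ : EuclideanSpace ℝ (Fin d),
    L θ - sInf (Set.range L) ≤ CL * (1 + ‖θ‖ ^ 2)
  gradLip : ∀ θ θ' : EuclideanSpace ℝ (Fin d),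
    ‖gradient L θ - gradient L θ'‖ ≤ MgL * ‖θ - θ'‖
  gradBdd : ∀ θ : EuclideanSpace ℝ (Fin d), ‖gradient L θ‖ ≤ CgL


section Helpers

variable {α : Type*} {m : MeasurableSpace α} {μ : Measure α}

/-- exp is Lipschitz below a threshold. -/
lemma exp_lip {x y c : ℝ} (hx : x ≤ c) (hy : y ≤ c) :
    |Real.exp x - Real.exp y| ≤ Real.exp c * |x - y| := by
  wlog h : y ≤ x generalizing x y
  · rw [abs_sub_comm, abs_sub_comm x y]; exact this hy hx (le_of_not_ge h)
  have ht : 0 ≤ x - y := sub_nonneg.2 h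
  rw [abs_of_nonneg (sub_nonneg.2 (Real.exp_le_exp.2 h)), abs_of_nonneg ht]
  have h2 : Real.exp (x - y) - 1 ≤ (x - y) * Real.exp (x - y) := by
    have h3 := Real.add_one_le_exp (-(x - y))
    have h4 : Real.exp (-(x-y)) * Real.exp (x-y) = 1 := by
      rw [← Real.exp_add]; simp
    nlinarith [Real.exp_pos (x - y)]
  calc Real.exp x - Real.exp y = Real.exp y * (Real.exp (x - y) - 1) := by
        rw [mul_sub, mul_one, ← Real.exp_add, show y + (x - y) = x by ring]
    _ ≤ Real.exp y * ((x - y) * Real.exp (x - y)) :=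
        mul_le_mul_of_nonneg_left h2 (Real.exp_pos y).le
    _ = (x - y) * Real.exp x := by
        rw [mul_comm (x - y) (Real.exp (x - y)), ← mul_assoc, ← Real.exp_add,
          show y + (x - y) = x by ring]; ring
    _ ≤ (x - y) * Real.exp c := mul_le_mul_of_nonneg_left (Real.exp_le_exp.2 hx) ht
    _ = Real.exp c * (x - y) := mul_comm _ _

lemma cauchy_schwarz_int (f g : α → ℝ) (hf0 : ∀ x, 0 ≤ f x) (hg0 : ∀ x, 0 ≤ g x)
    (hfm : AEStronglyMeasurable f μ) (hgm : AEStronglyMeasurable g μ)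
    (hf2 : Integrable (fun x => f x ^ 2) μ) (hg2 : Integrable (fun x => g x ^ 2) μ) :
    ∫ x, f x * g x ∂μ ≤ Real.sqrt (∫ x, f x ^ 2 ∂μ) * Real.sqrt (∫ x, g x ^ 2 ∂μ) := by
  have hpq : (2:ℝ).HolderConjugate 2 := ⟨by norm_num, by norm_num, by norm_num⟩
  have hf2' : MemLp f (ENNReal.ofReal 2) μ := by
    rw [show ENNReal.ofReal 2 = 2 by simp]
    exact (memLp_two_iff_integrable_sq hfm).2 hf2
  have hg2' : MemLp g (ENNReal.ofReal 2) μ := by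
    rw [show ENNReal.ofReal 2 = 2 by simp]
    exact (memLp_two_iff_integrable_sq hgm).2 hg2
  have H := integral_mul_le_Lp_mul_Lq_of_nonneg hpq (Filter.Eventually.of_forall hf0)
    (Filter.Eventually.of_forall hg0) hf2' hg2'
  have e1 : ∀ x : ℝ, x ^ (2:ℝ) = x ^ (2:ℕ) := fun x => by
    rw [show (2:ℝ) = ((2:ℕ):ℝ) by norm_num, Real.rpow_natCast]
  simp_rw [e1] at H
  rw [Real.sqrt_eq_rpow, Real.sqrt_eq_rpow]
  exact H

lemma integrable_mul_of_sq (f g : α → ℝ) (hf0 : ∀ x, 0 ≤ f x) (hg0 : ∀ x, 0 ≤ g x)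
    (hfm : AEStronglyMeasurable f μ) (hgm : AEStronglyMeasurable g μ)
    (hf2 : Integrable (fun x => f x ^ 2) μ) (hg2 : Integrable (fun x => g x ^ 2) μ) :
    Integrable (fun x => f x * g x) μ := by
  have iadd : Integrable (fun x => f x ^ 2 + g x ^ 2) μ := hf2.add hg2
  refine Integrable.mono' iadd (hfm.mul hgm) (Filter.Eventually.of_forall fun x => ?_)
  rw [Real.norm_of_nonneg (mul_nonneg (hf0 x) (hg0 x))]
  nlinarith [sq_nonneg (f x - g x), hf0 x, hg0 x]

lemma integrable_comp_of_map {β : Type*} [MeasurableSpace β] {F : Type*}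
    [NormedAddCommGroup F] {pl : Measure α} {μ : Measure β} {φ : α → β}
    (hφ : Measurable φ) (h : pl.map φ = μ) {f : β → F}
    (hf : AEStronglyMeasurable f μ) (hi : Integrable f μ) :
    Integrable (fun p => f (φ p)) pl := by
  rw [← h] at hf hi
  exact (integrable_map_measure hf hφ.aemeasurable).1 hi

lemma integral_comp_of_map {β : Type*} [MeasurableSpace β] {F : Type*}
    [NormedAddCommGroup F] [NormedSpace ℝ F] {pl : Measure α} {μ : Measure β} {φ : α → β}
    (hφ : Measurable φ) (h : pl.map φ = μ) {f : β → F}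
    (hf : AEStronglyMeasurable f μ) :
    ∫ y, f y ∂μ = ∫ p, f (φ p) ∂pl := by
  rw [← h] at hf ⊢
  exact integral_map hφ.aemeasurable hf

lemma le_one_add_pow4 (x : ℝ) (hx : 0 ≤ x) : x ≤ 1 + x ^ 4 := by
  nlinarith [sq_nonneg (x^2-1), sq_nonneg (x-1), sq_nonneg x, sq_nonneg (x+1)]

lemma sq_bound1 (x y : ℝ) (hx : 0 ≤ x) (hy : 0 ≤ y) :
    (x + y) ^ 2 ≤ 3 * (2 + x ^ 4 + y ^ 4) := by
  nlinarith [sq_nonneg (x*x-1), sq_nonneg (y*y-1), sq_nonneg (x-y), sq_nonneg (x+y)]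

lemma sq_bound2 (x y : ℝ) (hx : 0 ≤ x) (hy : 0 ≤ y) :
    ((x + y) * y) ^ 2 ≤ 3 * (2 + x ^ 4 + y ^ 4) := by
  nlinarith [sq_nonneg (x*y - y*y), sq_nonneg (x*y + y*y), sq_nonneg (x-y), sq_nonneg (x+y),
    sq_nonneg (x*x - y*y), mul_nonneg hx hy, sq_nonneg (y*y-1)]

end Helpers

section Key

variable {d : ℕ}

local notation "E" => EuclideanSpace ℝ (Fin d)

set_option maxHeartbeats 1000000 in
/-- The key single-loss-function stability estimate. -/
lemma key_stability (α K : ℝ) (hα : 0 < α) (hK : 0 < K)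
    (L : E → ℝ) (ML CL MgL CgL : ℝ)
    (hA : Assumption1 L ML CL MgL CgL) (hbdd : BddAbove (Set.range L)) :
    ∃ c > 0, ∀ (μ μh : Measure E),
      IsProbabilityMeasure μ → IsProbabilityMeasure μh →
      Integrable (fun θ => ‖θ‖ ^ 4) μ → Integrable (fun θ => ‖θ‖ ^ 4) μh →
      (∫ θ, ‖θ‖ ^ 4 ∂μ) ≤ K → (∫ θ, ‖θ‖ ^ 4 ∂μh) ≤ K →
      ‖consensusPoint α L μ - consensusPoint α L μh‖ ≤ c * W2 μ μh := by
  classical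
  set w : E → ℝ := fun θ => Real.exp (-α * L θ) with hw_def
  set a : ℝ := Real.exp (-α * sSup (Set.range L)) with ha_def
  set b : ℝ := Real.exp (-α * sInf (Set.range L)) with hb_def
  have ha : 0 < a := Real.exp_pos _
  have hb : 0 < b := Real.exp_pos _
  have hL_le : ∀ θ : E, L θ ≤ sSup (Set.range L) := fun θ => le_csSup hbdd ⟨θ, rfl⟩
  have hL_ge : ∀ θ : E, sInf (Set.range L) ≤ L θ := fun θ => csInf_le hA.bddBelow ⟨θ, rfl⟩
  have hwa : ∀ θ : E, a ≤ w θ := fun θ =>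
    Real.exp_le_exp.2 (mul_le_mul_of_nonpos_left (hL_le θ) (neg_nonpos.2 hα.le))
  have hwb : ∀ θ : E, w θ ≤ b := fun θ =>
    Real.exp_le_exp.2 (mul_le_mul_of_nonpos_left (hL_ge θ) (neg_nonpos.2 hα.le))
  have hw0 : ∀ θ : E, 0 < w θ := fun θ => Real.exp_pos _
  have contL : Continuous L := hA.differentiable.continuous
  have contw : Continuous w := Real.continuous_exp.comp (continuous_const.mul contL)
  have contwθ : Continuous (fun θ : E => w θ • θ) := contw.smul continuous_id
  -- Lipschitz estimate for w
  have hwlip : ∀ θ θ' : E, |w θ - w θ'| ≤ (α * b * ML) * ((‖θ‖ + ‖θ'‖) * ‖θ - θ'‖) := by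
    intro θ θ'
    have h1 : -α * L θ ≤ -α * sInf (Set.range L) :=
      mul_le_mul_of_nonpos_left (hL_ge θ) (neg_nonpos.2 hα.le)
    have h2 : -α * L θ' ≤ -α * sInf (Set.range L) :=
      mul_le_mul_of_nonpos_left (hL_ge θ') (neg_nonpos.2 hα.le)
    calc |w θ - w θ'| ≤ b * |(-α * L θ) - (-α * L θ')| := exp_lip h1 h2
      _ = b * (α * |L θ - L θ'|) := by
          rw [show (-α * L θ) - (-α * L θ') = -(α * (L θ - L θ')) by ring, abs_neg,
            abs_mul, abs_of_pos hα]
      _ ≤ b * (α * (ML * (‖θ‖ + ‖θ'‖) * ‖θ - θ'‖)) :=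
          mul_le_mul_of_nonneg_left
            (mul_le_mul_of_nonneg_left (hA.locLip θ θ') hα.le) hb.le
      _ = (α * b * ML) * ((‖θ‖ + ‖θ'‖) * ‖θ - θ'‖) := by ring
  set S : ℝ := Real.sqrt (6 + 6 * K) with hS_def
  have hS0 : 0 < S := Real.sqrt_pos.2 (by linarith)
  have habm : 0 < α * b * ML := mul_pos (mul_pos hα hb) hA.ML_pos
  have hcpos : 0 < S * (a⁻¹ * b + a⁻¹ * (α * b * ML) +
      a⁻¹ * a⁻¹ * (α * b * ML) * (b * (1 + K))) := by
    have h1 : 0 < a⁻¹ := inv_pos.2 ha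
    have h3 : 0 < b * (1 + K) := mul_pos hb (by linarith)
    exact mul_pos hS0 (add_pos (add_pos (mul_pos h1 hb) (mul_pos h1 habm))
      (mul_pos (mul_pos (mul_pos h1 h1) habm) h3))
  refine ⟨S * (a⁻¹ * b + a⁻¹ * (α * b * ML) + a⁻¹ * a⁻¹ * (α * b * ML) * (b * (1 + K))),
    hcpos, ?_⟩
  intro μ μh hμ hμh h4μ h4μh hKμ hKμh
  set c : ℝ := S * (a⁻¹ * b + a⁻¹ * (α * b * ML) + a⁻¹ * a⁻¹ * (α * b * ML) * (b * (1 + K)))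
    with hc_def
  have hc0 : 0 < c := hcpos
  -- integrability over μ and μh
  have dom_int : ∀ (ν : Measure E), IsProbabilityMeasure ν → Integrable (fun θ => ‖θ‖ ^ 4) ν →
      Integrable (fun θ : E => 1 + ‖θ‖ ^ 4) ν := fun ν hν h4 => (integrable_const 1).add h4
  have intw : ∀ (ν : Measure E), IsProbabilityMeasure ν → Integrable w ν := by
    intro ν hν
    refine Integrable.mono' (integrable_const b) contw.aestronglyMeasurable
      (Filter.Eventually.of_forall fun θ => ?_)
    rw [Real.norm_of_nonneg (hw0 θ).le]; exact hwb θ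
  have wθbd : ∀ θ : E, w θ * ‖θ‖ ≤ b * (1 + ‖θ‖ ^ 4) := by
    intro θ
    calc w θ * ‖θ‖ ≤ b * ‖θ‖ := mul_le_mul_of_nonneg_right (hwb θ) (norm_nonneg θ)
      _ ≤ b * (1 + ‖θ‖ ^ 4) :=
        mul_le_mul_of_nonneg_left (le_one_add_pow4 _ (norm_nonneg θ)) hb.le
  have intwθ : ∀ (ν : Measure E), IsProbabilityMeasure ν → Integrable (fun θ => ‖θ‖ ^ 4) ν →
      Integrable (fun θ : E => w θ • θ) ν := by
    intro ν hν h4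
    refine Integrable.mono' ((dom_int ν hν h4).const_mul b) contwθ.aestronglyMeasurable
      (Filter.Eventually.of_forall fun θ => ?_)
    rw [norm_smul, Real.norm_of_nonneg (hw0 θ).le]
    exact wθbd θ
  -- the quantities
  set A : ℝ := ∫ θ, w θ ∂μ with hA_def
  set B : ℝ := ∫ θ, w θ ∂μh with hB_def
  set P : E := ∫ θ, w θ • θ ∂μ with hP_def
  set Q : E := ∫ θ, w θ • θ ∂μh with hQ_def
  have hAa : a ≤ A := by
    rw [hA_def]
    calc a = ∫ _, a ∂μ := by simp [measure_univ]
      _ ≤ ∫ θ, w θ ∂μ := integral_mono (integrable_const a) (intw μ hμ) (fun θ => hwa θ)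
  have hBa : a ≤ B := by
    rw [hB_def]
    calc a = ∫ _, a ∂μh := by simp [measure_univ]
      _ ≤ ∫ θ, w θ ∂μh := integral_mono (integrable_const a) (intw μh hμh) (fun θ => hwa θ)
  have hA0 : 0 < A := lt_of_lt_of_le ha hAa
  have hB0 : 0 < B := lt_of_lt_of_le ha hBa
  have hAinv : A⁻¹ ≤ a⁻¹ := inv_anti₀ ha hAa
  have hBinv : B⁻¹ ≤ a⁻¹ := inv_anti₀ ha hBa
  -- bound on ‖Q‖
  have hQbd : ‖Q‖ ≤ b * (1 + K) := by
    rw [hQ_def]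
    calc ‖∫ θ, w θ • θ ∂μh‖ ≤ ∫ θ, ‖w θ • θ‖ ∂μh := norm_integral_le_integral_norm _
      _ ≤ ∫ θ, b * (1 + ‖θ‖ ^ 4) ∂μh := by
          refine integral_mono (intwθ μh hμh h4μh).norm ((dom_int μh hμh h4μh).const_mul b)
            (fun θ => ?_)
          rw [norm_smul, Real.norm_of_nonneg (hw0 θ).le]
          exact wθbd θ
      _ = b * (1 + ∫ θ, ‖θ‖ ^ 4 ∂μh) := by
          rw [integral_const_mul, integral_add (integrable_const 1) h4μh]
          simp [measure_univ]
      _ ≤ b * (1 + K) := mul_le_mul_of_nonneg_left (by linarith) hb.le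
  -- per-coupling bound
  have hcoup : ∀ pl : Measure (E × E), IsProbabilityMeasure pl →
      pl.map Prod.fst = μ → pl.map Prod.snd = μh →
      ‖consensusPoint α L μ - consensusPoint α L μh‖ ≤
        c * Real.sqrt (∫ p : E × E, ‖p.1 - p.2‖ ^ 2 ∂pl) := by
    intro pl hpl hfst hsnd
    set g : E × E → ℝ := fun p => ‖p.1 - p.2‖ with hg_def
    set f₂ : E × E → ℝ := fun p => (‖p.1‖ + ‖p.2‖) * ‖p.2‖ with hf2_def
    set f₃ : E × E → ℝ := fun p => ‖p.1‖ + ‖p.2‖ with hf3_def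
    set G : E × E → ℝ := fun p => 2 + ‖p.1‖ ^ 4 + ‖p.2‖ ^ 4 with hG_def
    have cont_g : Continuous g := (continuous_fst.sub continuous_snd).norm
    have cont_f2 : Continuous f₂ := (continuous_fst.norm.add continuous_snd.norm).mul
      continuous_snd.norm
    have cont_f3 : Continuous f₃ := continuous_fst.norm.add continuous_snd.norm
    have cont4 : Continuous (fun θ : E => ‖θ‖ ^ 4) := (continuous_norm.pow 4)
    -- transfers
    have int14 : Integrable (fun p : E × E => ‖p.1‖ ^ 4) pl :=
      integrable_comp_of_map measurable_fst hfst cont4.aestronglyMeasurable h4μ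
    have int24 : Integrable (fun p : E × E => ‖p.2‖ ^ 4) pl :=
      integrable_comp_of_map measurable_snd hsnd cont4.aestronglyMeasurable h4μh
    have T14 : (∫ θ, ‖θ‖ ^ 4 ∂μ) = ∫ p : E × E, ‖p.1‖ ^ 4 ∂pl :=
      integral_comp_of_map measurable_fst hfst cont4.aestronglyMeasurable
    have T24 : (∫ θ, ‖θ‖ ^ 4 ∂μh) = ∫ p : E × E, ‖p.2‖ ^ 4 ∂pl :=
      integral_comp_of_map measurable_snd hsnd cont4.aestronglyMeasurable
    have intG : Integrable G pl := ((integrable_const 2).add int14).add int24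
    have i1 : Integrable (fun p : E × E => 2 + ‖p.1‖ ^ 4) pl := (integrable_const 2).add int14
    have hGval : ∫ p, G p ∂pl ≤ 2 + 2 * K := by
      simp only [hG_def]
      rw [integral_add i1 int24, integral_add (integrable_const 2) int14]
      simp only [integral_const, measure_univ, ENNReal.toReal_one, probReal_univ, one_smul, smul_eq_mul]
      rw [← T14, ← T24]; linarith
    have hG2 : ∀ p : E × E, 2 ≤ G p := fun p => by
      have h1 := pow_nonneg (norm_nonneg p.1) 4
      have h2 := pow_nonneg (norm_nonneg p.2) 4
      simp only [hG_def]; linarith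
    -- pointwise domination of squares
    have hg_le : ∀ p : E × E, g p ≤ ‖p.1‖ + ‖p.2‖ := fun p => norm_sub_le _ _
    have sq_g : ∀ p : E × E, g p ^ 2 ≤ 3 * G p := by
      intro p
      have h2 := sq_bound1 ‖p.1‖ ‖p.2‖ (norm_nonneg _) (norm_nonneg _)
      have h3 : g p ^ 2 ≤ (‖p.1‖ + ‖p.2‖) ^ 2 :=
        pow_le_pow_left₀ (norm_nonneg _) (hg_le p) 2
      simp only [hG_def]; linarith
    have sq_f2 : ∀ p : E × E, f₂ p ^ 2 ≤ 3 * G p := by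
      intro p
      have h2 := sq_bound2 ‖p.1‖ ‖p.2‖ (norm_nonneg _) (norm_nonneg _)
      simp only [hf2_def, hG_def]; linarith
    have sq_f3 : ∀ p : E × E, f₃ p ^ 2 ≤ 3 * G p := by
      intro p
      have h2 := sq_bound1 ‖p.1‖ ‖p.2‖ (norm_nonneg _) (norm_nonneg _)
      simp only [hf3_def, hG_def]; linarith
    -- integrability of squares
    have int_sq : ∀ (f : E × E → ℝ), Continuous f → (∀ p, 0 ≤ f p) →
        (∀ p : E × E, f p ^ 2 ≤ 3 * G p) → Integrable (fun p => f p ^ 2) pl := by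
      intro f hf hf0 hsq
      refine Integrable.mono' (intG.const_mul 3) (hf.pow 2).aestronglyMeasurable
        (Filter.Eventually.of_forall fun p => ?_)
      rw [Real.norm_of_nonneg (pow_nonneg (hf0 p) 2)]; exact hsq p
    have f2_0 : ∀ p, 0 ≤ f₂ p := fun p => mul_nonneg (by positivity) (norm_nonneg _)
    have f3_0 : ∀ p : E × E, 0 ≤ f₃ p := fun p => by positivity
    have g_0 : ∀ p : E × E, 0 ≤ g p := fun p => norm_nonneg _
    have int_g2 : Integrable (fun p => g p ^ 2) pl := int_sq g cont_g g_0 sq_g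
    have int_f22 : Integrable (fun p => f₂ p ^ 2) pl := int_sq f₂ cont_f2 f2_0 sq_f2
    have int_f32 : Integrable (fun p => f₃ p ^ 2) pl := int_sq f₃ cont_f3 f3_0 sq_f3
    -- the key quantity D
    set D : ℝ := ∫ p : E × E, ‖p.1 - p.2‖ ^ 2 ∂pl with hD_def
    have hDg : D = ∫ p, g p ^ 2 ∂pl := rfl
    have hD0 : 0 ≤ D := integral_nonneg fun p => by positivity
    have sqrtD0 : 0 ≤ Real.sqrt D := Real.sqrt_nonneg _
    -- bounds on the square integrals
    have int_sq_le : ∀ (f : E × E → ℝ), (∀ p, 0 ≤ f p) → Integrable (fun p => f p ^ 2) pl →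
        (∀ p : E × E, f p ^ 2 ≤ 3 * G p) → (∫ p, f p ^ 2 ∂pl) ≤ 6 + 6 * K := by
      intro f hf0 hfint hsq
      calc (∫ p, f p ^ 2 ∂pl) ≤ ∫ p, 3 * G p ∂pl :=
            integral_mono hfint (intG.const_mul 3) hsq
        _ = 3 * ∫ p, G p ∂pl := integral_const_mul 3 _
        _ ≤ 3 * (2 + 2 * K) := mul_le_mul_of_nonneg_left hGval (by norm_num)
        _ = 6 + 6 * K := by ring
    -- Cauchy-Schwarz bounds
    have csb : ∀ (f : E × E → ℝ), Continuous f → (∀ p, 0 ≤ f p) →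
        Integrable (fun p => f p ^ 2) pl → (∀ p : E × E, f p ^ 2 ≤ 3 * G p) →
        (∫ p, f p * g p ∂pl) ≤ S * Real.sqrt D := by
      intro f hfc hf0 hfi hsq
      calc (∫ p, f p * g p ∂pl) ≤
          Real.sqrt (∫ p, f p ^ 2 ∂pl) * Real.sqrt (∫ p, g p ^ 2 ∂pl) :=
            cauchy_schwarz_int f g hf0 g_0 hfc.aestronglyMeasurable
              cont_g.aestronglyMeasurable hfi int_g2
        _ ≤ S * Real.sqrt D := by
            rw [hS_def, hDg]
            exact mul_le_mul_of_nonneg_right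
              (Real.sqrt_le_sqrt (int_sq_le f hf0 hfi hsq)) (Real.sqrt_nonneg _)
    have hI2 : (∫ p, f₂ p * g p ∂pl) ≤ S * Real.sqrt D := csb f₂ cont_f2 f2_0 int_f22 sq_f2
    have hI3 : (∫ p, f₃ p * g p ∂pl) ≤ S * Real.sqrt D := csb f₃ cont_f3 f3_0 int_f32 sq_f3
    have hI1 : (∫ p, g p ∂pl) ≤ S * Real.sqrt D := by
      have h1 : (∫ p : E × E, (1:ℝ) * g p ∂pl) ≤ S * Real.sqrt D := by
        refine csb (fun _ => 1) continuous_const (fun _ => zero_le_one) ?_ ?_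
        · simpa using (integrable_const (1:ℝ))
        · intro p
          have h := hG2 p
          show (1:ℝ) ^ 2 ≤ 3 * G p
          norm_num; linarith
      simpa using h1
    -- integrability of the products
    have int_f2g : Integrable (fun p => f₂ p * g p) pl :=
      integrable_mul_of_sq f₂ g f2_0 g_0 cont_f2.aestronglyMeasurable
        cont_g.aestronglyMeasurable int_f22 int_g2
    have int_f3g : Integrable (fun p => f₃ p * g p) pl :=
      integrable_mul_of_sq f₃ g f3_0 g_0 cont_f3.aestronglyMeasurable
        cont_g.aestronglyMeasurable int_f32 int_g2
    have int_g : Integrable g pl := by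
      have h1 := integrable_mul_of_sq (fun _ => 1) g (fun _ => zero_le_one) g_0
        aestronglyMeasurable_const cont_g.aestronglyMeasurable
        (by simpa using (integrable_const (1:ℝ))) int_g2
      simpa using h1
    -- nonnegativity of the three integrals
    have I1_0 : 0 ≤ ∫ p, g p ∂pl := integral_nonneg g_0
    have I2_0 : 0 ≤ ∫ p, f₂ p * g p ∂pl :=
      integral_nonneg fun p => mul_nonneg (f2_0 p) (g_0 p)
    have I3_0 : 0 ≤ ∫ p, f₃ p * g p ∂pl :=
      integral_nonneg fun p => mul_nonneg (f3_0 p) (g_0 p)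
    -- transfers for w
    have int_w1 : Integrable (fun p : E × E => w p.1) pl :=
      integrable_comp_of_map measurable_fst hfst contw.aestronglyMeasurable (intw μ hμ)
    have int_w2 : Integrable (fun p : E × E => w p.2) pl :=
      integrable_comp_of_map measurable_snd hsnd contw.aestronglyMeasurable (intw μh hμh)
    have int_wθ1 : Integrable (fun p : E × E => w p.1 • p.1) pl :=
      integrable_comp_of_map measurable_fst hfst contwθ.aestronglyMeasurable (intwθ μ hμ h4μ)
    have int_wθ2 : Integrable (fun p : E × E => w p.2 • p.2) pl :=
      integrable_comp_of_map measurable_snd hsnd contwθ.aestronglyMeasurable (intwθ μh hμh h4μh)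
    have TA : A = ∫ p : E × E, w p.1 ∂pl :=
      integral_comp_of_map measurable_fst hfst contw.aestronglyMeasurable
    have TB : B = ∫ p : E × E, w p.2 ∂pl :=
      integral_comp_of_map measurable_snd hsnd contw.aestronglyMeasurable
    have TP : P = ∫ p : E × E, w p.1 • p.1 ∂pl :=
      integral_comp_of_map measurable_fst hfst contwθ.aestronglyMeasurable
    have TQ : Q = ∫ p : E × E, w p.2 • p.2 ∂pl :=
      integral_comp_of_map measurable_snd hsnd contwθ.aestronglyMeasurable
    -- bound on ‖P - Q‖
    have hPQ : ‖P - Q‖ ≤ b * (∫ p, g p ∂pl) + (α * b * ML) * ∫ p, f₂ p * g p ∂pl := by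
      have hsub : P - Q = ∫ p : E × E, (w p.1 • p.1 - w p.2 • p.2) ∂pl := by
        rw [TP, TQ, integral_sub int_wθ1 int_wθ2]
      have ptwise : ∀ p : E × E, ‖w p.1 • p.1 - w p.2 • p.2‖ ≤
          b * g p + (α * b * ML) * (f₂ p * g p) := by
        intro p
        have hid : w p.1 • p.1 - w p.2 • p.2
            = w p.1 • (p.1 - p.2) + (w p.1 - w p.2) • p.2 := by
          rw [smul_sub, sub_smul]; abel
        calc ‖w p.1 • p.1 - w p.2 • p.2‖
            ≤ ‖w p.1 • (p.1 - p.2)‖ + ‖(w p.1 - w p.2) • p.2‖ := by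
              rw [hid]; exact norm_add_le _ _
          _ = w p.1 * ‖p.1 - p.2‖ + |w p.1 - w p.2| * ‖p.2‖ := by
              rw [norm_smul, norm_smul, Real.norm_of_nonneg (hw0 p.1).le, Real.norm_eq_abs]
          _ ≤ b * ‖p.1 - p.2‖
              + ((α * b * ML) * ((‖p.1‖ + ‖p.2‖) * ‖p.1 - p.2‖)) * ‖p.2‖ :=
              add_le_add (mul_le_mul_of_nonneg_right (hwb p.1) (norm_nonneg _))
                (mul_le_mul_of_nonneg_right (hwlip p.1 p.2) (norm_nonneg _))
          _ = b * g p + (α * b * ML) * (f₂ p * g p) := by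
              simp only [hg_def, hf2_def]; ring
      have intRHS : Integrable (fun p : E × E =>
          b * g p + (α * b * ML) * (f₂ p * g p)) pl :=
        (int_g.const_mul b).add (int_f2g.const_mul _)
      calc ‖P - Q‖ ≤ ∫ p : E × E, ‖w p.1 • p.1 - w p.2 • p.2‖ ∂pl := by
            rw [hsub]; exact norm_integral_le_integral_norm _
        _ ≤ ∫ p : E × E, (b * g p + (α * b * ML) * (f₂ p * g p)) ∂pl :=
            integral_mono (int_wθ1.sub int_wθ2).norm intRHS ptwise
        _ = b * (∫ p, g p ∂pl) + (α * b * ML) * ∫ p, f₂ p * g p ∂pl := by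
            rw [integral_add (int_g.const_mul b) (int_f2g.const_mul _),
              integral_const_mul, integral_const_mul]
    -- bound on |B - A|
    have hBA : |B - A| ≤ (α * b * ML) * ∫ p, f₃ p * g p ∂pl := by
      have hsub : B - A = ∫ p : E × E, (w p.2 - w p.1) ∂pl := by
        rw [TA, TB, integral_sub int_w2 int_w1]
      have ptwise : ∀ p : E × E, |w p.2 - w p.1| ≤ (α * b * ML) * (f₃ p * g p) := by
        intro p
        calc |w p.2 - w p.1| ≤ (α * b * ML) * ((‖p.2‖ + ‖p.1‖) * ‖p.2 - p.1‖) :=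
            hwlip p.2 p.1
          _ = (α * b * ML) * (f₃ p * g p) := by
              rw [norm_sub_rev]; simp only [hf3_def, hg_def]; ring
      calc |B - A| = |∫ p : E × E, (w p.2 - w p.1) ∂pl| := by rw [hsub]
        _ ≤ ∫ p : E × E, |w p.2 - w p.1| ∂pl := by
            simpa [Real.norm_eq_abs] using
              norm_integral_le_integral_norm (μ := pl) (fun p : E × E => w p.2 - w p.1)
        _ ≤ ∫ p : E × E, (α * b * ML) * (f₃ p * g p) ∂pl :=
            integral_mono (int_w2.sub int_w1).abs (int_f3g.const_mul _) ptwise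
        _ = (α * b * ML) * ∫ p, f₃ p * g p ∂pl := integral_const_mul _ _
    -- assemble
    have hdiff : consensusPoint α L μ - consensusPoint α L μh
        = A⁻¹ • (P - Q) + (A⁻¹ - B⁻¹) • Q := by
      show A⁻¹ • P - B⁻¹ • Q = _
      rw [smul_sub, sub_smul]; abel
    have hABinv : |A⁻¹ - B⁻¹| ≤ a⁻¹ * a⁻¹ * ((α * b * ML) * ∫ p, f₃ p * g p ∂pl) := by
      have hid : A⁻¹ - B⁻¹ = (B - A) * (A⁻¹ * B⁻¹) := by field_simp
      have hABnn : 0 ≤ A⁻¹ * B⁻¹ := mul_nonneg (inv_nonneg.2 hA0.le) (inv_nonneg.2 hB0.le)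
      rw [hid, abs_mul, abs_of_nonneg hABnn]
      have h1 : A⁻¹ * B⁻¹ ≤ a⁻¹ * a⁻¹ :=
        mul_le_mul hAinv hBinv (inv_nonneg.2 hB0.le) (inv_nonneg.2 ha.le)
      have h3 : (0:ℝ) ≤ (α * b * ML) * ∫ p, f₃ p * g p ∂pl := mul_nonneg habm.le I3_0
      calc |B - A| * (A⁻¹ * B⁻¹)
          ≤ ((α * b * ML) * ∫ p, f₃ p * g p ∂pl) * (a⁻¹ * a⁻¹) :=
            mul_le_mul hBA h1 hABnn h3
        _ = a⁻¹ * a⁻¹ * ((α * b * ML) * ∫ p, f₃ p * g p ∂pl) := by ring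
    have hn1 : ‖P - Q‖ ≤ (b + α * b * ML) * (S * Real.sqrt D) := by
      calc ‖P - Q‖ ≤ b * (∫ p, g p ∂pl) + (α * b * ML) * ∫ p, f₂ p * g p ∂pl := hPQ
        _ ≤ b * (S * Real.sqrt D) + (α * b * ML) * (S * Real.sqrt D) :=
            add_le_add (mul_le_mul_of_nonneg_left hI1 hb.le)
              (mul_le_mul_of_nonneg_left hI2 habm.le)
        _ = (b + α * b * ML) * (S * Real.sqrt D) := by ring
    have hI3' : (α * b * ML) * (∫ p, f₃ p * g p ∂pl) ≤ (α * b * ML) * (S * Real.sqrt D) :=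
      mul_le_mul_of_nonneg_left hI3 habm.le
    have hainn : (0:ℝ) ≤ a⁻¹ := inv_nonneg.2 ha.le
    calc ‖consensusPoint α L μ - consensusPoint α L μh‖
        = ‖A⁻¹ • (P - Q) + (A⁻¹ - B⁻¹) • Q‖ := by rw [hdiff]
      _ ≤ ‖A⁻¹ • (P - Q)‖ + ‖(A⁻¹ - B⁻¹) • Q‖ := norm_add_le _ _
      _ = A⁻¹ * ‖P - Q‖ + |A⁻¹ - B⁻¹| * ‖Q‖ := by
          rw [norm_smul, norm_smul, Real.norm_of_nonneg (inv_nonneg.2 hA0.le),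
            Real.norm_eq_abs]
      _ ≤ a⁻¹ * ((b + α * b * ML) * (S * Real.sqrt D))
          + (a⁻¹ * a⁻¹ * ((α * b * ML) * (S * Real.sqrt D))) * (b * (1 + K)) := by
          have e1 : A⁻¹ * ‖P - Q‖ ≤ a⁻¹ * ((b + α * b * ML) * (S * Real.sqrt D)) :=
            mul_le_mul hAinv hn1 (norm_nonneg _) hainn
          have e2 : |A⁻¹ - B⁻¹| * ‖Q‖ ≤
              (a⁻¹ * a⁻¹ * ((α * b * ML) * (S * Real.sqrt D))) * (b * (1 + K)) := by
            have h6 : a⁻¹ * a⁻¹ * ((α * b * ML) * ∫ p, f₃ p * g p ∂pl) ≤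
                a⁻¹ * a⁻¹ * ((α * b * ML) * (S * Real.sqrt D)) :=
              mul_le_mul_of_nonneg_left hI3' (mul_nonneg hainn hainn)
            have h7 : (0:ℝ) ≤ a⁻¹ * a⁻¹ * ((α * b * ML) * ∫ p, f₃ p * g p ∂pl) :=
              le_trans (abs_nonneg _) hABinv
            have h8 : (0:ℝ) ≤ b * (1 + K) := mul_nonneg hb.le (by linarith)
            calc |A⁻¹ - B⁻¹| * ‖Q‖
                ≤ (a⁻¹ * a⁻¹ * ((α * b * ML) * ∫ p, f₃ p * g p ∂pl)) * (b * (1 + K)) :=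
                  mul_le_mul hABinv hQbd (norm_nonneg _) h7
              _ ≤ (a⁻¹ * a⁻¹ * ((α * b * ML) * (S * Real.sqrt D))) * (b * (1 + K)) :=
                  mul_le_mul_of_nonneg_right h6 h8
          linarith
      _ = c * Real.sqrt D := by rw [hc_def]; ring
  -- conclude using the infimum
  set Sset : Set ℝ := {x : ℝ | ∃ pl : Measure (E × E),
    IsProbabilityMeasure pl ∧ pl.map Prod.fst = μ ∧ pl.map Prod.snd = μh ∧
    x = (∫ p, ‖p.1 - p.2‖ ^ 2 ∂pl) ^ (1/2 : ℝ)} with hSset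
  have hW2 : W2 μ μh = sInf Sset := rfl
  have hne : Sset.Nonempty := by
    refine ⟨(∫ p, ‖p.1 - p.2‖ ^ 2 ∂(μ.prod μh)) ^ (1/2 : ℝ), μ.prod μh, inferInstance, ?_, ?_, rfl⟩
    · rw [Measure.map_fst_prod]; simp [measure_univ]
    · rw [Measure.map_snd_prod]; simp [measure_univ]
  have hlb : ∀ x ∈ Sset, ‖consensusPoint α L μ - consensusPoint α L μh‖ / c ≤ x := by
    rintro x ⟨pl, hpl, hfst, hsnd, rfl⟩
    rw [div_le_iff₀ hc0, ← Real.sqrt_eq_rpow, mul_comm]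
    exact hcoup pl hpl hfst hsnd
  have hsinf := le_csInf hne hlb
  rw [hW2]
  calc ‖consensusPoint α L μ - consensusPoint α L μh‖
      = c * (‖consensusPoint α L μ - consensusPoint α L μh‖ / c) := by
        field_simp
    _ ≤ c * sInf Sset := mul_le_mul_of_nonneg_left hsinf hc0.le

end Key

/-- W₂-stability of the consensus points: under Assumption 1 and boundedness
from above of `L₁, L₂`, there is a constant `c₀ > 0` such that for all Borel probability
measures `μ, μ̂` with fourth moments at most `K` and `k = 1, 2`,
`|m_{L_k}^α[μ] - m_{L_k}^α[μ̂]| ≤ c₀ W₂(μ, μ̂)`. -/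
theorem consensusPoint_W2_stability {d : ℕ} (α K : ℝ) (hα : 0 < α) (hK : 0 < K)
    (L : Fin 2 → EuclideanSpace ℝ (Fin d) → ℝ)
    (ML CL MgL CgL : Fin 2 → ℝ)
    (hA : ∀ k, Assumption1 (L k) (ML k) (CL k) (MgL k) (CgL k))
    (hbddAbove : ∀ k, BddAbove (Set.range (L k))) :
    ∃ c₀ > 0, ∀ (μ μh : Measure (EuclideanSpace ℝ (Fin d))),
      IsProbabilityMeasure μ → IsProbabilityMeasure μh →
      Integrable (fun θ => ‖θ‖ ^ 4) μ → Integrable (fun θ => ‖θ‖ ^ 4) μh →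
      (∫ θ, ‖θ‖ ^ 4 ∂μ) ≤ K → (∫ θ, ‖θ‖ ^ 4 ∂μh) ≤ K →
      ∀ k : Fin 2,
        ‖consensusPoint α (L k) μ - consensusPoint α (L k) μh‖ ≤ c₀ * W2 μ μh := by
  obtain ⟨c0, hc0, H0⟩ := key_stability α K hα hK (L 0) (ML 0) (CL 0) (MgL 0) (CgL 0)
    (hA 0) (hbddAbove 0)
  obtain ⟨c1, hc1, H1⟩ := key_stability α K hα hK (L 1) (ML 1) (CL 1) (MgL 1) (CgL 1)
    (hA 1) (hbddAbove 1)
  refine ⟨c0 + c1, by linarith, ?_⟩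
  intro μ μh hμ hμh h4μ h4μh hKμ hKμh k
  have hW2nn : 0 ≤ W2 μ μh := by
    apply Real.sInf_nonneg
    rintro x ⟨pl, hpl, hfst, hsnd, rfl⟩
    exact Real.rpow_nonneg (integral_nonneg fun p => by positivity) _
  fin_cases k
  · have := H0 μ μh hμ hμh h4μ h4μh hKμ hKμh
    calc ‖consensusPoint α (L 0) μ - consensusPoint α (L 0) μh‖ ≤ c0 * W2 μ μh := this
      _ ≤ (c0 + c1) * W2 μ μh := by nlinarith
  · have := H1 μ μh hμ hμh h4μ h4μh hKμ hKμh
    calc ‖consensusPoint α (L 1) μ - consensusPoint α (L 1) μh‖ ≤ c1 * W2 μ μh := this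
      _ ≤ (c0 + c1) * W2 μ μh := by nlinarith
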